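/- Let φ₁, φ₂ : ℝ → ℝ² be C¹ curves parametrized by arclength, and define Ψ(s₁,s₂) = (θ,t) implicitly by π_θ(φ₁(s₁)) = π_θ(φ₂(s₂)) = t (on the open set where φ₁(s₁) ≠ φ₂(s₂)). Then the Jacobian determinant satisfies |JΨ(s₁,s₂)| = |e_θ·φ₁'(s₁)| · |e_θ·φ₂'(s₂)| / |φ₁(s₁) − φ₂(s₂)|, where e_θ = (cos θ, sin θ). -/

import Mathlib

open MeasureTheory Set Real
open scoped ENNReal NNReal

noncomputable section

abbrev Plane := EuclideanSpace ℝ (Fin 2)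

def mk2 (a b : ℝ) : Plane := (WithLp.equiv 2 (Fin 2 → ℝ)).symm ![a, b]

/-- Orthogonal projection onto direction (cos θ, sin θ). -/
def proj (θ : ℝ) (x : Plane) : ℝ := x 0 * Real.cos θ + x 1 * Real.sin θ

/-- Favard length. -/
def Fav (E : Set Plane) : ℝ≥0∞ := ∫⁻ θ in Set.Ioo 0 Real.pi, μH[1] (proj θ '' E)
set_option maxHeartbeats 1000000 in
/-- Jacobian formula for the implicit map (s₁,s₂) ↦ (θ,t). -/
theorem stmt13 (φ₁ φ₂ : ℝ → Plane) (Ψ : ℝ × ℝ → ℝ × ℝ)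
    (hΨ : ∀ p : ℝ × ℝ, proj (Ψ p).1 (φ₁ p.1) = (Ψ p).2 ∧ proj (Ψ p).1 (φ₂ p.2) = (Ψ p).2)
    (s₁ s₂ : ℝ) (d₁ d₂ : Plane)
    (hd₁ : HasDerivAt φ₁ d₁ s₁) (hd₂ : HasDerivAt φ₂ d₂ s₂)
    (hu₁ : ‖d₁‖ = 1) (hu₂ : ‖d₂‖ = 1)
    (hne : φ₁ s₁ ≠ φ₂ s₂)
    (D : (ℝ × ℝ) →L[ℝ] (ℝ × ℝ)) (hD : HasFDerivAt Ψ D (s₁, s₂)) :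
    |LinearMap.det (D : (ℝ × ℝ) →ₗ[ℝ] (ℝ × ℝ))|
      = |proj (Ψ (s₁, s₂)).1 d₁| * |proj (Ψ (s₁, s₂)).1 d₂| / dist (φ₁ s₁) (φ₂ s₂) := by
  set θ : ℝ := (Ψ (s₁, s₂)).1 with hθdef
  set x := φ₁ s₁
  set y := φ₂ s₂
  -- component derivatives
  have hx0 : HasDerivAt (fun s => φ₁ s 0) (d₁ 0) s₁ := by
    have h := (EuclideanSpace.proj (0 : Fin 2) : Plane →L[ℝ] ℝ).hasFDerivAt.comp_hasDerivAt s₁ hd₁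
    exact h
  have hx1 : HasDerivAt (fun s => φ₁ s 1) (d₁ 1) s₁ := by
    have h := (EuclideanSpace.proj (1 : Fin 2) : Plane →L[ℝ] ℝ).hasFDerivAt.comp_hasDerivAt s₁ hd₁
    exact h
  have hy0 : HasDerivAt (fun s => φ₂ s 0) (d₂ 0) s₂ := by
    have h := (EuclideanSpace.proj (0 : Fin 2) : Plane →L[ℝ] ℝ).hasFDerivAt.comp_hasDerivAt s₂ hd₂
    exact h
  have hy1 : HasDerivAt (fun s => φ₂ s 1) (d₂ 1) s₂ := by
    have h := (EuclideanSpace.proj (1 : Fin 2) : Plane →L[ℝ] ℝ).hasFDerivAt.comp_hasDerivAt s₂ hd₂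
    exact h
  have hfst : HasFDerivAt (fun p : ℝ × ℝ => p.1) (ContinuousLinearMap.fst ℝ ℝ ℝ) (s₁, s₂) :=
    hasFDerivAt_fst
  have hsnd : HasFDerivAt (fun p : ℝ × ℝ => p.2) (ContinuousLinearMap.snd ℝ ℝ ℝ) (s₁, s₂) :=
    hasFDerivAt_snd
  have hX0 : HasFDerivAt (fun p : ℝ × ℝ => φ₁ p.1 0)
      ((d₁ 0) • ContinuousLinearMap.fst ℝ ℝ ℝ) (s₁, s₂) :=
    by have h := hx0.comp_hasFDerivAt (s₁, s₂) hfst; exact h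
  have hX1 : HasFDerivAt (fun p : ℝ × ℝ => φ₁ p.1 1)
      ((d₁ 1) • ContinuousLinearMap.fst ℝ ℝ ℝ) (s₁, s₂) :=
    by have h := hx1.comp_hasFDerivAt (s₁, s₂) hfst; exact h
  have hY0 : HasFDerivAt (fun p : ℝ × ℝ => φ₂ p.2 0)
      ((d₂ 0) • ContinuousLinearMap.snd ℝ ℝ ℝ) (s₁, s₂) :=
    by have h := hy0.comp_hasFDerivAt (s₁, s₂) hsnd; exact h
  have hY1 : HasFDerivAt (fun p : ℝ × ℝ => φ₂ p.2 1)
      ((d₂ 1) • ContinuousLinearMap.snd ℝ ℝ ℝ) (s₁, s₂) :=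
    by have h := hy1.comp_hasFDerivAt (s₁, s₂) hsnd; exact h
  have hΘ : HasFDerivAt (fun p : ℝ × ℝ => (Ψ p).1)
      ((ContinuousLinearMap.fst ℝ ℝ ℝ).comp D) (s₁, s₂) := hD.fst
  have hT : HasFDerivAt (fun p : ℝ × ℝ => (Ψ p).2)
      ((ContinuousLinearMap.snd ℝ ℝ ℝ).comp D) (s₁, s₂) := hD.snd
  have hcos : HasFDerivAt (fun p : ℝ × ℝ => Real.cos ((Ψ p).1))
      ((-Real.sin θ) • ((ContinuousLinearMap.fst ℝ ℝ ℝ).comp D)) (s₁, s₂) :=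
    by have h := (Real.hasDerivAt_cos θ).comp_hasFDerivAt (s₁, s₂) hΘ; exact h
  have hsin : HasFDerivAt (fun p : ℝ × ℝ => Real.sin ((Ψ p).1))
      ((Real.cos θ) • ((ContinuousLinearMap.fst ℝ ℝ ℝ).comp D)) (s₁, s₂) :=
    by have h := (Real.hasDerivAt_sin θ).comp_hasFDerivAt (s₁, s₂) hΘ; exact h
  -- F₁
  have hF₁ : HasFDerivAt
      (fun p : ℝ × ℝ => φ₁ p.1 0 * Real.cos ((Ψ p).1) + φ₁ p.1 1 * Real.sin ((Ψ p).1) - (Ψ p).2)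
      ((((x 0) • ((-Real.sin θ) • ((ContinuousLinearMap.fst ℝ ℝ ℝ).comp D)) +
          (Real.cos θ) • ((d₁ 0) • ContinuousLinearMap.fst ℝ ℝ ℝ)) +
        ((x 1) • ((Real.cos θ) • ((ContinuousLinearMap.fst ℝ ℝ ℝ).comp D)) +
          (Real.sin θ) • ((d₁ 1) • ContinuousLinearMap.fst ℝ ℝ ℝ))) -
        (ContinuousLinearMap.snd ℝ ℝ ℝ).comp D) (s₁, s₂) :=
    ((hX0.mul hcos).add (hX1.mul hsin)).sub hT
  have hF₂ : HasFDerivAt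
      (fun p : ℝ × ℝ => φ₂ p.2 0 * Real.cos ((Ψ p).1) + φ₂ p.2 1 * Real.sin ((Ψ p).1) - (Ψ p).2)
      ((((y 0) • ((-Real.sin θ) • ((ContinuousLinearMap.fst ℝ ℝ ℝ).comp D)) +
          (Real.cos θ) • ((d₂ 0) • ContinuousLinearMap.snd ℝ ℝ ℝ)) +
        ((y 1) • ((Real.cos θ) • ((ContinuousLinearMap.fst ℝ ℝ ℝ).comp D)) +
          (Real.sin θ) • ((d₂ 1) • ContinuousLinearMap.snd ℝ ℝ ℝ))) -
        (ContinuousLinearMap.snd ℝ ℝ ℝ).comp D) (s₁, s₂) :=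
    ((hY0.mul hcos).add (hY1.mul hsin)).sub hT
  -- both functions are identically zero
  have hz₁ : (fun p : ℝ × ℝ =>
      φ₁ p.1 0 * Real.cos ((Ψ p).1) + φ₁ p.1 1 * Real.sin ((Ψ p).1) - (Ψ p).2)
      = fun _ => (0 : ℝ) := by
    funext p
    have := (hΨ p).1
    simp only [proj] at this
    linarith
  have hz₂ : (fun p : ℝ × ℝ =>
      φ₂ p.2 0 * Real.cos ((Ψ p).1) + φ₂ p.2 1 * Real.sin ((Ψ p).1) - (Ψ p).2)
      = fun _ => (0 : ℝ) := by
    funext p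
    have := (hΨ p).2
    simp only [proj] at this
    linarith
  have h0₁ := hF₁
  rw [hz₁] at h0₁
  have h0₂ := hF₂
  rw [hz₂] at h0₂
  have hL₁ := h0₁.unique (hasFDerivAt_const 0 _)
  have hL₂ := h0₂.unique (hasFDerivAt_const 0 _)
  have h11 := ContinuousLinearMap.ext_iff.1 hL₁ (1, 0)
  have h12 := ContinuousLinearMap.ext_iff.1 hL₁ (0, 1)
  have h21 := ContinuousLinearMap.ext_iff.1 hL₂ (1, 0)
  have h22 := ContinuousLinearMap.ext_iff.1 hL₂ (0, 1)
  simp only [ContinuousLinearMap.add_apply, ContinuousLinearMap.sub_apply,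
    ContinuousLinearMap.smul_apply, ContinuousLinearMap.comp_apply,
    ContinuousLinearMap.coe_fst', ContinuousLinearMap.coe_snd',
    ContinuousLinearMap.zero_apply, smul_eq_mul, mul_one, mul_zero] at h11 h12 h21 h22
  set p₁ : ℝ := (D (1, 0)).1 with hp₁
  set q₁ : ℝ := (D (1, 0)).2 with hq₁
  set p₂ : ℝ := (D (0, 1)).1 with hp₂
  set q₂ : ℝ := (D (0, 1)).2 with hq₂
  -- determinant formula
  have hdet : LinearMap.det (D : (ℝ × ℝ) →ₗ[ℝ] (ℝ × ℝ)) = p₁ * q₂ - p₂ * q₁ := by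
    rw [← LinearMap.det_toMatrix (Module.Basis.finTwoProd ℝ), Matrix.det_fin_two]
    simp [LinearMap.toMatrix_apply, Module.Basis.finTwoProd_zero, Module.Basis.finTwoProd_one,
      Module.Basis.coe_finTwoProd_repr, hp₁, hq₁, hp₂, hq₂]
  -- abbreviations
  set a : ℝ := proj θ d₁ with ha
  set b : ℝ := proj θ d₂ with hb
  set c₁ : ℝ := x 1 * Real.cos θ - x 0 * Real.sin θ with hc₁
  set c₂ : ℝ := y 1 * Real.cos θ - y 0 * Real.sin θ with hc₂
  -- orthogonality of x - y to e_θ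
  have horth : (x 0 - y 0) * Real.cos θ + (x 1 - y 1) * Real.sin θ = 0 := by
    have h1 := (hΨ (s₁, s₂)).1
    have h2 := (hΨ (s₁, s₂)).2
    simp only [proj] at h1 h2
    have : x 0 * Real.cos θ + x 1 * Real.sin θ = y 0 * Real.cos θ + y 1 * Real.sin θ := by
      rw [h1, h2]
    linarith
  -- distance equals |c₁ - c₂|
  have hdist : dist x y = |c₁ - c₂| := by
    rw [EuclideanSpace.dist_eq, Fin.sum_univ_two]
    rw [← Real.sqrt_sq_eq_abs]
    congr 1
    have hsc := Real.sin_sq_add_cos_sq θ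
    simp only [Real.dist_eq, hc₁, hc₂]
    rw [sq_abs, sq_abs]
    nlinarith [horth, hsc]
  have hdpos : (0 : ℝ) < dist x y := dist_pos.2 hne
  have hcne : c₁ - c₂ ≠ 0 := by
    intro h
    rw [hdist, h, abs_zero] at hdpos
    exact lt_irrefl _ hdpos
  -- the four equations in nice form
  have e1 : a + c₁ * p₁ - q₁ = 0 := by
    simp only [ha, hc₁, proj]; linear_combination h11
  have e2 : c₁ * p₂ - q₂ = 0 := by
    simp only [hc₁]; linear_combination h12
  have e3 : c₂ * p₁ - q₁ = 0 := by
    simp only [hc₂]; linear_combination h21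
  have e4 : b + c₂ * p₂ - q₂ = 0 := by
    simp only [hb, hc₂, proj]; linear_combination h22
  have hq1 : q₁ = c₂ * p₁ := by linarith
  have hq2 : q₂ = c₁ * p₂ := by linarith
  have haa : a = (c₂ - c₁) * p₁ := by linear_combination e1 - e3
  have hbb : b = (c₁ - c₂) * p₂ := by linear_combination e4 - e2
  have key : (p₁ * q₂ - p₂ * q₁) * (c₁ - c₂) = -(a * b) := by
    rw [hq1, hq2, haa, hbb]; ring
  rw [hdet, hdist]
  rw [eq_div_iff (abs_ne_zero.2 hcne), ← abs_mul, ← abs_mul, key, abs_neg]
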